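/- In the accelerated gradient method, define z₁ = ∇f(x₀), μ₁ = L, g_k = ∇f(y_k), z_{k+1} = (1-θ_k)z_k + θ_k g_k, and μ_{k+1} = (1-θ_k)μ_k. Then for all k ≥ 1: y_k = (1-θ_k)x_k + θ_k(x₀ - z_k/μ_k) and x_{k+1} = (1-θ_k)x_k + θ_k(x₀ - z_{k+1}/μ_{k+1}). -/

import Mathlib

open scoped RealInnerProductSpace

theorem accelerated_gradient_z_representation
    {E : Type*} [NormedAddCommGroup E] [InnerProductSpace ℝ E] [CompleteSpace E]
    (f : E → ℝ) (f' : E → E) (L : ℝ) (hL : 0 < L)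
    (hconv : ConvexOn ℝ Set.univ f)
    (hdiff : ∀ x : E, HasGradientAt f (f' x) x)
    (hlip : ∀ x y : E, ‖f' x - f' y‖ ≤ L * ‖x - y‖)
    (x y : ℕ → E) (θ : ℕ → ℝ)
    (hy0 : y 0 = x 0) (hθ0 : θ 0 = 1)
    (hx : ∀ k, x (k + 1) = y k - (1 / L) • f' (y k))
    (hθmem : ∀ k, θ (k + 1) ∈ Set.Ioo (0 : ℝ) 1)
    (hθrec : ∀ k, θ (k + 1) ^ 2 = θ k ^ 2 * (1 - θ (k + 1)))
    (hyrec : ∀ k, y (k + 1)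
      = x (k + 1) + (θ (k + 1) * (1 - θ k) / θ k) • (x (k + 1) - x k))
    (z : ℕ → E) (μ : ℕ → ℝ)
    (hz1 : z 1 = f' (x 0)) (hμ1 : μ 1 = L)
    (hzrec : ∀ k, 1 ≤ k → z (k + 1) = (1 - θ k) • z k + θ k • f' (y k))
    (hμrec : ∀ k, 1 ≤ k → μ (k + 1) = (1 - θ k) * μ k) :
    ∀ k : ℕ, 1 ≤ k →
      y k = (1 - θ k) • x k + θ k • (x 0 - (μ k)⁻¹ • z k) ∧
      x (k + 1) = (1 - θ k) • x k + θ k • (x 0 - (μ (k + 1))⁻¹ • z (k + 1)) := by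
  have hθpos : ∀ k, 0 < θ k := by
    intro k
    cases k with
    | zero => rw [hθ0]; norm_num
    | succ n => exact (hθmem n).1
  have hθlt : ∀ k, 1 ≤ k → θ k < 1 := by
    intro k hk
    obtain ⟨n, rfl⟩ := Nat.exists_eq_add_of_le' hk
    exact (hθmem n).2
  -- μ (k+1) = L * θ k ^ 2
  have hμ' : ∀ k, μ (k + 1) = L * θ k ^ 2 := by
    intro k
    induction k with
    | zero => rw [hμ1, hθ0]; ring
    | succ n ih =>
      rw [hμrec (n + 1) (Nat.le_add_left 1 n), ih, hθrec n]
      ring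
  have hLne : L ≠ 0 := ne_of_gt hL
  -- key: second part follows from first part at each k ≥ 1
  have hstep : ∀ k, 1 ≤ k →
      y k = (1 - θ k) • x k + θ k • (x 0 - (μ k)⁻¹ • z k) →
      x (k + 1) = (1 - θ k) • x k + θ k • (x 0 - (μ (k + 1))⁻¹ • z (k + 1)) := by
    intro k hk hyk
    have hθk : θ k ≠ 0 := ne_of_gt (hθpos k)
    have h1θ : (1 : ℝ) - θ k ≠ 0 := by
      have := hθlt k hk; linarith
    have hμk1 : μ (k + 1) = L * θ k ^ 2 := hμ' k
    have hμk : μ k ≠ 0 := by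
      intro h
      have := hμrec k hk
      rw [h, mul_zero] at this
      rw [this] at hμk1
      have : L * θ k ^ 2 ≠ 0 := by positivity
      exact this hμk1.symm
    have hμk1ne : μ (k + 1) ≠ 0 := by
      rw [hμk1]; positivity
    have hkey : (1 - θ k) * μ k = L * θ k ^ 2 := by
      rw [← hμrec k hk]; exact hμk1
    rw [hx k, hzrec k hk, hyk]
    match_scalars <;> (field_simp; try ring)
    all_goals rw [Nat.add_comm 1 k]
    · linear_combination (-1 : ℝ) * hμrec k hk
    · rw [hμk1]
  intro k hk
  induction k with
  | zero => omega
  | succ n ih =>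
    rcases Nat.eq_or_lt_of_le hk with h1 | h1
    · -- base case n + 1 = 1
      have hn : n = 0 := by omega
      subst hn
      have hy1 : y 1 = x 1 := by
        rw [hyrec 0, hθ0]
        simp
      have hfirst : y 1 = (1 - θ 1) • x 1 + θ 1 • (x 0 - (μ 1)⁻¹ • z 1) := by
        have hx1 : x 1 = x 0 - (μ 1)⁻¹ • z 1 := by
          rw [hx 0, hy0, hz1, hμ1, one_div]
        rw [hy1, hx1]
        match_scalars <;> ring
      exact ⟨hfirst, hstep 1 le_rfl hfirst⟩
    · -- inductive case: n ≥ 1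
      have hn : 1 ≤ n := by omega
      obtain ⟨hfirst, hsec⟩ := ih hn
      have hθn : θ n ≠ 0 := ne_of_gt (hθpos n)
      -- from hsec, express x 0 - (μ (n+1))⁻¹ • z (n+1)
      have hw : x 0 - (μ (n + 1))⁻¹ • z (n + 1)
          = (θ n)⁻¹ • (x (n + 1) - (1 - θ n) • x n) := by
        rw [hsec]
        match_scalars <;> (field_simp; try ring)
      have hfirst' : y (n + 1) = (1 - θ (n + 1)) • x (n + 1)
          + θ (n + 1) • (x 0 - (μ (n + 1))⁻¹ • z (n + 1)) := by
        rw [hyrec n, hw]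
        match_scalars <;> (field_simp; try ring)
      exact ⟨hfirst', hstep (n + 1) (by omega) hfirst'⟩
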